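/- For every nondisturbing behavior B on a compatibility scenario Υ and every noncontextual behavior B_NC on Υ, there exists a noncontextual wiring with input scenario Υ, whose output scenario has the same maximal contexts and the same context-outcome sets as Υ, mapping B to B_NC; i.e., B → B_NC for every B ∈ ND(Υ) and B_NC ∈ NC(Υ). -/

import Mathlib

noncomputable section

/-- A compatibility scenario: a finite set of measurements `M`, finite nonempty
outcome sets `O x` for each measurement, and an antichain `C` of maximal contexts. -/
structure Scenario where
  M : Type
  [fintypeM : Fintype M]
  [decEqM : DecidableEq M]
  O : M → Type
  [fintypeO : ∀ x, Fintype (O x)]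
  [decEqO : ∀ x, DecidableEq (O x)]
  [nonemptyO : ∀ x, Nonempty (O x)]
  C : Finset (Finset M)
  antichain : ∀ γ ∈ C, ∀ γ' ∈ C, γ ⊆ γ' → γ = γ'

attribute [instance] Scenario.fintypeM Scenario.decEqM Scenario.fintypeO
  Scenario.decEqO Scenario.nonemptyO

/-- The elements of a set of measurements, as a type. -/
def Scenario.El (S : Scenario) (γ : Finset S.M) : Type := {x : S.M // x ∈ γ}

instance (S : Scenario) (γ : Finset S.M) : Fintype (S.El γ) :=
  show Fintype {x : S.M // x ∈ γ} from inferInstance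

instance (S : Scenario) (γ : Finset S.M) : DecidableEq (S.El γ) :=
  show DecidableEq {x : S.M // x ∈ γ} from inferInstance

/-- Joint outcomes `O^γ` of a set of measurements `γ`. -/
def Scenario.JO (S : Scenario) (γ : Finset S.M) : Type := (x : S.El γ) → S.O x.1

instance (S : Scenario) (γ : Finset S.M) : Fintype (S.JO γ) :=
  show Fintype ((x : S.El γ) → S.O x.1) from inferInstance

instance (S : Scenario) (γ : Finset S.M) : DecidableEq (S.JO γ) :=
  show DecidableEq ((x : S.El γ) → S.O x.1) from inferInstance

instance (S : Scenario) (γ : Finset S.M) : Nonempty (S.JO γ) :=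
  ⟨fun _ => Classical.arbitrary _⟩

/-- Global outcome assignments `O^M`. -/
abbrev Scenario.Glob (S : Scenario) : Type := (x : S.M) → S.O x

/-- Restriction of a global assignment to a set of measurements. -/
def Scenario.restr (S : Scenario) (γ : Finset S.M) (o : S.Glob) : S.JO γ :=
  fun x => o x.1

/-- The (maximal) contexts of a scenario. -/
def Scenario.Ctx (S : Scenario) : Type := {γ : Finset S.M // γ ∈ S.C}

instance (S : Scenario) : Fintype S.Ctx :=
  show Fintype {γ : Finset S.M // γ ∈ S.C} from inferInstance

instance (S : Scenario) : DecidableEq S.Ctx :=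
  show DecidableEq {γ : Finset S.M // γ ∈ S.C} from inferInstance

/-- A behavior (box): a family of real-valued functions, one for each maximal context. -/
def Behavior (S : Scenario) : Type := (γ : S.Ctx) → S.JO γ.1 → ℝ

/-- The family forms a probability distribution on each maximal context. -/
def IsProb (S : Scenario) (B : Behavior S) : Prop :=
  ∀ γ : S.Ctx, (∀ t, 0 ≤ B γ t) ∧ (∑ t, B γ t = 1)

/-- Kochen–Specker noncontextuality: existence of a global section, i.e. a probability
distribution on `O^M` whose marginal on each maximal context equals the behavior. -/
def IsNC (S : Scenario) (B : Behavior S) : Prop :=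
  ∃ pM : S.Glob → ℝ, (∀ o, 0 ≤ pM o) ∧ (∑ o, pM o = 1) ∧
    ∀ (γ : S.Ctx) (t : S.JO γ.1),
      B γ t = ∑ o : S.Glob, if S.restr γ.1 o = t then pM o else 0

/-- Restriction between nested sets of measurements. -/
def Scenario.restr2 (S : Scenario) {γ δ : Finset S.M} (h : δ ⊆ γ) (t : S.JO γ) :
    S.JO δ := fun x => t ⟨x.1, h x.2⟩

/-- The no-disturbance condition: marginals agree on intersections of contexts. -/
def IsND (S : Scenario) (B : Behavior S) : Prop :=
  ∀ γ γ' : S.Ctx, ∀ u : S.JO (γ.1 ∩ γ'.1),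
    (∑ t : S.JO γ.1, if S.restr2 Finset.inter_subset_left t = u then B γ t else 0) =
      (∑ t : S.JO γ'.1, if S.restr2 Finset.inter_subset_right t = u then B γ' t else 0)

/-- Factorizability: a noncontextual (hidden-variable) factorizable model. -/
def IsFactorizable (S : Scenario) (B : Behavior S) : Prop :=
  ∃ (k : ℕ) (q : Fin k → ℝ) (e : (x : S.M) → Fin k → S.O x → ℝ),
    (∀ l, 0 ≤ q l) ∧ (∑ l, q l = 1) ∧
    (∀ x l, (∀ o, 0 ≤ e x l o) ∧ (∑ o, e x l o = 1)) ∧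
    ∀ (γ : S.Ctx) (t : S.JO γ.1),
      B γ t = ∑ l, q l * ∏ x : S.El γ.1, e x.1 l (t x)

/-- The deterministic behavior induced by a global outcome assignment. -/
def detB (S : Scenario) (o : S.Glob) : Behavior S :=
  fun γ t => if S.restr γ.1 o = t then 1 else 0
/-- A noncontextual wiring with input scenario `S`, whose output scenario has the
measurements, maximal contexts and outcome sets of `T`.  It consists of a
noncontextual pre-processing behavior (given by its global section `pPre` on the
pre-processing outcome sets `OPre`), a function `f` selecting, from each
pre-processing context `β` and joint outcome `r`, a context of the input scenario,
a coordinatewise wiring `wmap` feeding every output measurement slot from a single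
input measurement, and adaptively chosen noncontextual (factorizable)
post-processing boxes given by a hidden variable `φ` with distribution `q β r`
and response functions `resp`. -/
structure Wiring (S T : Scenario) where
  OPre : T.M → Type
  [fintypeOPre : ∀ m, Fintype (OPre m)]
  [decEqOPre : ∀ m, DecidableEq (OPre m)]
  [nonemptyOPre : ∀ m, Nonempty (OPre m)]
  pPre : ((x : T.M) → OPre x) → ℝ
  pPre_nonneg : ∀ o, 0 ≤ pPre o
  pPre_sum : ∑ o, pPre o = 1
  f : (β : T.Ctx) → ((x : T.El β.1) → OPre x.1) → S.Ctx
  wmap : (β : T.Ctx) → (r : (x : T.El β.1) → OPre x.1) → T.El β.1 → S.El (f β r).1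
  nPhi : (β : T.Ctx) → ((x : T.El β.1) → OPre x.1) → ℕ
  q : (β : T.Ctx) → (r : (x : T.El β.1) → OPre x.1) → Fin (nPhi β r) → ℝ
  q_nonneg : ∀ β r φ, 0 ≤ q β r φ
  q_sum : ∀ β r, ∑ φ, q β r φ = 1
  resp : (β : T.Ctx) → (r : (x : T.El β.1) → OPre x.1) → (m : T.El β.1) →
    Fin (nPhi β r) → S.O (wmap β r m).1 → T.O m.1 → ℝ
  resp_nonneg : ∀ β r m φ o u, 0 ≤ resp β r m φ o u
  resp_sum : ∀ β r m φ o, ∑ u, resp β r m φ o u = 1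

attribute [instance] Wiring.fintypeOPre Wiring.decEqOPre Wiring.nonemptyOPre

/-- Marginal of the pre-processing behavior on a pre-processing context. -/
def Wiring.preB {S T : Scenario} (W : Wiring S T) (β : T.Ctx)
    (r : (x : T.El β.1) → W.OPre x.1) : ℝ :=
  ∑ o : (x : T.M) → W.OPre x,
    if (fun x : T.El β.1 => o x.1) = r then W.pPre o else 0

/-- The wired behavior `W(B)` on the output scenario. -/
def Wiring.apply {S T : Scenario} (W : Wiring S T) (B : Behavior S) : Behavior T :=
  fun β t =>
    ∑ r : (x : T.El β.1) → W.OPre x.1,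
      ∑ s : S.JO (W.f β r).1,
        W.preB β r * B (W.f β r) s *
          ∑ φ : Fin (W.nPhi β r),
            W.q β r φ * ∏ m : T.El β.1, W.resp β r m φ (s (W.wmap β r m)) (t m)

/-- Free convertibility of behaviors on a scenario by noncontextual wirings (whose
output scenario has the same maximal contexts and context-outcome sets). -/
def Arrow (S : Scenario) (B B' : Behavior S) : Prop :=
  ∃ W : Wiring S S, W.apply B = B'
/-- for every nondisturbing behavior `B` on `Υ` and every noncontextual
behavior `B_NC` on `Υ` there is a noncontextual wiring (with output scenario having the
same maximal contexts and context-outcome sets as `Υ`) mapping `B` to `B_NC`. -/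
theorem statement_7 (S : Scenario) (B : Behavior S) (hProb : IsProb S B)
    (hND : IsND S B) (BNC : Behavior S) (hNC : IsNC S BNC) :
    ∃ W : Wiring S S, W.apply B = BNC := by
  obtain ⟨pM, hpos, hsum, hmarg⟩ := hNC
  refine ⟨{
    OPre := S.O
    pPre := pM
    pPre_nonneg := hpos
    pPre_sum := hsum
    f := fun β _ => β
    wmap := fun _ _ m => m
    nPhi := fun _ _ => 1
    q := fun _ _ _ => 1
    q_nonneg := fun _ _ _ => zero_le_one
    q_sum := fun _ _ => by simp
    resp := fun β r m _ _ u => if u = r m then 1 else 0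
    resp_nonneg := fun _ _ _ _ _ u => by split <;> norm_num
    resp_sum := fun β r m _ _ => by simp }, ?_⟩
  funext β t
  show (∑ r : (x : S.El β.1) → S.O x.1, ∑ s : S.JO β.1,
      (∑ o : S.Glob, if (fun x : S.El β.1 => o x.1) = r then pM o else 0) * B β s *
        ∑ _φ : Fin 1, 1 * ∏ m : S.El β.1, (if t m = r m then (1:ℝ) else 0)) = BNC β t
  open Classical in
  have hprod : ∀ r : (x : S.El β.1) → S.O x.1,
      (∏ m : S.El β.1, (if t m = r m then (1:ℝ) else 0)) = if r = t then 1 else 0 := by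
    intro r
    by_cases h : r = t
    · subst h; simp
    · rw [if_neg h, Finset.prod_eq_zero_iff]
      have : ¬ ∀ m, t m = r m := fun hc => h (funext fun m => (hc m).symm)
      push_neg at this
      obtain ⟨m, hm⟩ := this
      exact ⟨m, Finset.mem_univ m, if_neg hm⟩
  open Classical in
  have : ∀ r : (x : S.El β.1) → S.O x.1, ∑ s : S.JO β.1,
      (∑ o : S.Glob, if (fun x : S.El β.1 => o x.1) = r then pM o else 0) * B β s *
        ∑ _φ : Fin 1, 1 * ∏ m : S.El β.1, (if t m = r m then (1:ℝ) else 0)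
      = (if r = t then (1:ℝ) else 0) *
        (∑ o : S.Glob, if (fun x : S.El β.1 => o x.1) = r then pM o else 0) := by
    intro r
    simp only [Fin.sum_univ_one, one_mul, hprod r]
    rw [← Finset.sum_mul, ← Finset.mul_sum, (hProb β).2, mul_one, mul_comm]
  rw [Finset.sum_congr rfl fun r _ => this r]
  simp only [ite_mul, one_mul, zero_mul]
  rw [hmarg β t]
  refine (Finset.sum_eq_single t (fun r _ hr => if_neg hr) (fun h => absurd (Finset.mem_univ t) h)).trans ?_
  exact if_pos rfl
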